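/- arXiv:2010.05547 — 2 statements merged into one kernel-verified Lean document; each statement's English description precedes it below -/
import Mathlib

section
/- Let Ψ be a semi-invariant conformal ζ^⊥-Riemannian submersion with dim fiber = 2p+q and horizontal dimension q+2r+1, where q+2r ≠ 2. Then any two of the following imply the third: (i) Ψ is harmonic (τ(Ψ) = 0); (ii) the fibers are minimal (mean curvature vector vanishes); (iii) Ψ is horizontally homothetic (the horizontal part of grad ln λ vanishes). -/
/-- With `τ(Ψ) = −(2p+q)Ψ_*(μ₀) + (2−q−2r)Ψ_*(G)` and `q+2r ≠ 2`, any two of the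
following imply the third: (i) `Ψ` is harmonic (`τ = 0`); (ii) the fibers are minimal
(`μ₀ = 0`); (iii) `Ψ` is horizontally homothetic (`G = H grad ln λ = 0`). -/
theorem stmt_17 {E W : Type*} [NormedAddCommGroup E] [InnerProductSpace ℝ E]
    [AddCommGroup W] [Module ℝ W]
    (p q r : ℕ) (hq : q + 2*r ≠ 2) (hp : 0 < 2*p + q)
    (Ψs : E →ₗ[ℝ] W) (H : Submodule ℝ E)
    (hinj : ∀ x ∈ H, Ψs x = 0 → x = 0)
    (μ₀ G : E) (hμH : μ₀ ∈ H) (hGH : G ∈ H)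
    (τ : W)
    (hτ : τ = -(((2*p+q : ℕ) : ℝ)) • Ψs μ₀ + ((2:ℝ) - (q:ℝ) - 2*(r:ℝ)) • Ψs G) :
    ((τ = 0 ∧ μ₀ = 0) → G = 0) ∧
    ((τ = 0 ∧ G = 0) → μ₀ = 0) ∧
    ((μ₀ = 0 ∧ G = 0) → τ = 0) := by
  have hc2 : (2:ℝ) - (q:ℝ) - 2*(r:ℝ) ≠ 0 := by
    intro h
    apply hq
    have : (q:ℝ) + 2*(r:ℝ) = 2 := by linarith
    exact_mod_cast this
  have hc1 : (((2*p+q : ℕ) : ℝ)) ≠ 0 := by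
    exact_mod_cast hp.ne'
  refine ⟨?_, ?_, ?_⟩
  · rintro ⟨h0, hμ⟩
    rw [hμ] at hτ
    simp only [map_zero, smul_zero, zero_add, h0] at hτ
    have : Ψs G = 0 := by
      rcases smul_eq_zero.mp hτ.symm with h | h
      · exact absurd h hc2
      · exact h
    exact hinj G hGH this
  · rintro ⟨h0, hG⟩
    rw [hG] at hτ
    simp only [map_zero, smul_zero, add_zero, h0] at hτ
    have : Ψs μ₀ = 0 := by
      rcases smul_eq_zero.mp hτ.symm with h | h
      · exact absurd (neg_eq_zero.mp h) hc1
      · exact h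
    exact hinj μ₀ hμH this
  · rintro ⟨hμ, hG⟩
    rw [hτ, hμ, hG]
    simp
end

section
/- Let Ψ be a semi-invariant conformal ζ^⊥-Riemannian submersion from an almost contact metric manifold, and let W ∈ D₂ and Q ∈ μ. If (∇Ψ_*)(φW, Q) = 0 for all such W, Q, then λ is constant on μ and on φD₂, i.e., Ψ is horizontally homothetic; conversely, if Ψ is horizontally homothetic then (∇Ψ_*)(φW, Q) = 0. -/
/-- `(∇Ψ_*)(φW, Q) = 0` for all `W ∈ D₂`, `Q ∈ μ` if and only if `Ψ` is horizontally
homothetic, i.e. `grad ln λ` is orthogonal to the horizontal distribution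
`H = φD₂ ⊕ μ`. Here `B` denotes the second fundamental form on horizontal vectors given
by the Baird–Wood lemma. -/
theorem stmt_19 {E F : Type*} [NormedAddCommGroup E] [InnerProductSpace ℝ E]
    [NormedAddCommGroup F] [InnerProductSpace ℝ F]
    (T : E →ₗ[ℝ] F) (lam : ℝ) (hlam : lam ≠ 0)
    (H φD₂ μ : Submodule ℝ E)
    (hsub1 : φD₂ ≤ H) (hsub2 : μ ≤ H) (hsup : φD₂ ⊔ μ = H)
    (horth : ∀ W ∈ φD₂, ∀ Q ∈ μ, (inner ℝ W Q : ℝ) = 0)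
    (hne1 : φD₂ ≠ ⊥) (hne2 : μ ≠ ⊥)
    (G : E)
    (hconf : ∀ X Y, X ∈ H → Y ∈ H → (inner ℝ (T X) (T Y) : ℝ) = lam ^ 2 * inner ℝ X Y)
    (B : E → E → F)
    (hB : ∀ X Y, X ∈ H → Y ∈ H →
      B X Y = (inner ℝ G X : ℝ) • T Y + (inner ℝ G Y : ℝ) • T X - (inner ℝ X Y : ℝ) • T G) :
    (∀ W ∈ φD₂, ∀ Q ∈ μ, B W Q = 0) ↔ (∀ X ∈ H, (inner ℝ G X : ℝ) = 0) := by
  constructor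
  · intro h
    -- pick nonzero elements
    obtain ⟨W₀, hW₀, hW₀ne⟩ := Submodule.ne_bot_iff φD₂ |>.mp hne1
    obtain ⟨Q₀, hQ₀, hQ₀ne⟩ := Submodule.ne_bot_iff μ |>.mp hne2
    have key : ∀ W ∈ φD₂, ∀ Q ∈ μ, Q ≠ 0 → (inner ℝ G W : ℝ) = 0 := by
      intro W hW Q hQ hQne
      have hBW := h W hW Q hQ
      rw [hB W Q (hsub1 hW) (hsub2 hQ), horth W hW Q hQ] at hBW
      simp only [zero_smul, sub_zero] at hBW
      have h2 : (inner ℝ ((inner ℝ G W : ℝ) • T Q + (inner ℝ G Q : ℝ) • T W) (T Q) : ℝ) = 0 := by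
        rw [hBW]; simp
      rw [inner_add_left, real_inner_smul_left, real_inner_smul_left,
        hconf Q Q (hsub2 hQ) (hsub2 hQ), hconf W Q (hsub1 hW) (hsub2 hQ),
        horth W hW Q hQ, real_inner_self_eq_norm_sq] at h2
      have hq2 : (0:ℝ) < ‖Q‖ ^ 2 := pow_pos (norm_pos_iff.mpr hQne) 2
      have : (inner ℝ G W : ℝ) * (lam ^ 2 * ‖Q‖ ^ 2) = 0 := by linarith
      rcases mul_eq_zero.mp this with h' | h'
      · exact h'
      · exact absurd h' (ne_of_gt (mul_pos (pow_pos (abs_pos.mpr hlam) 2 |>.trans_eq (sq_abs lam)) hq2))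
    have key2 : ∀ Q ∈ μ, ∀ W ∈ φD₂, W ≠ 0 → (inner ℝ G Q : ℝ) = 0 := by
      intro Q hQ W hW hWne
      have hBW := h W hW Q hQ
      rw [hB W Q (hsub1 hW) (hsub2 hQ), horth W hW Q hQ] at hBW
      simp only [zero_smul, sub_zero] at hBW
      have h2 : (inner ℝ ((inner ℝ G W : ℝ) • T Q + (inner ℝ G Q : ℝ) • T W) (T W) : ℝ) = 0 := by
        rw [hBW]; simp
      rw [inner_add_left, real_inner_smul_left, real_inner_smul_left,
        hconf Q W (hsub2 hQ) (hsub1 hW), hconf W W (hsub1 hW) (hsub1 hW),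
        real_inner_self_eq_norm_sq] at h2
      have hQW : (inner ℝ Q W : ℝ) = 0 := by
        rw [real_inner_comm]; exact horth W hW Q hQ
      rw [hQW] at h2
      have hq2 : (0:ℝ) < ‖W‖ ^ 2 := pow_pos (norm_pos_iff.mpr hWne) 2
      have : (inner ℝ G Q : ℝ) * (lam ^ 2 * ‖W‖ ^ 2) = 0 := by linarith
      rcases mul_eq_zero.mp this with h' | h'
      · exact h'
      · exact absurd h' (ne_of_gt (mul_pos (pow_pos (abs_pos.mpr hlam) 2 |>.trans_eq (sq_abs lam)) hq2))
    intro X hX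
    rw [← hsup] at hX
    obtain ⟨w, hw, q, hq, rfl⟩ := Submodule.mem_sup.mp hX
    rw [inner_add_right, key w hw Q₀ hQ₀ hQ₀ne, key2 q hq W₀ hW₀ hW₀ne, add_zero]
  · intro h W hW Q hQ
    rw [hB W Q (hsub1 hW) (hsub2 hQ), h W (hsub1 hW), h Q (hsub2 hQ),
      horth W hW Q hQ]
    simp
end
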